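/- Let r and s be coprime positive integers with a = r/s ∈ (0, 1/2), and let P denote the normalized arc-length measure on the unit circle S¹ (parametrized by angle θ ∈ [0, 2π)). Define Q(B) = (1/2π) ∫_B (1 + (1/2) sin(2sθ)) dθ for Borel sets B ⊆ S¹. Then Q is a Borel probability measure on S¹, Q ≠ P, and Q(C) = P(C) = a for every arc C of S¹ of arc length 2πa. -/

import Mathlib

open MeasureTheory Real Set
open scoped ENNReal

instance : Fact (0 < 2 * π) := ⟨by positivity⟩

lemma lift_eval (s : ℕ) (θ : ℝ) :
    AddCircle.liftIco (2 * π) 0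
      (fun θ : ℝ => ENNReal.ofReal (1 + (1 / 2) * Real.sin (2 * s * θ))) (θ : AddCircle (2 * π))
      = ENNReal.ofReal (1 + (1 / 2) * Real.sin (2 * s * θ)) := by
  have hT : (0:ℝ) < 2 * π := two_pi_pos
  have hm : toIcoMod hT 0 θ ∈ Ico 0 (0 + 2 * π) := toIcoMod_mem_Ico hT 0 θ
  have hdef : toIcoMod hT 0 θ = θ - toIcoDiv hT 0 θ • (2 * π) := rfl
  have hcoe : ((toIcoMod hT 0 θ : ℝ) : AddCircle (2 * π)) = θ := by
    rw [hdef, AddCircle.coe_sub]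
    have : ((toIcoDiv hT 0 θ • (2 * π) : ℝ) : AddCircle (2 * π)) = 0 := by
      rw [QuotientAddGroup.mk_zsmul, AddCircle.coe_period, smul_zero]
    rw [this, sub_zero]
  rw [← hcoe, AddCircle.liftIco_coe_apply hm]
  congr 1
  rw [hdef, zsmul_eq_mul]
  have h2 : 2 * (s:ℝ) * (θ - (toIcoDiv hT 0 θ : ℝ) * (2 * π))
      = 2 * s * θ - ((2 * s * toIcoDiv hT 0 θ : ℤ) : ℝ) * (2 * π) := by push_cast; ring
  rw [h2, Real.sin_sub_int_mul_two_pi]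

lemma haar_eq : (AddCircle.haarAddCircle : Measure (AddCircle (2 * π)))
    = (ENNReal.ofReal (2 * π))⁻¹ • (volume : Measure (AddCircle (2 * π))) := by
  rw [AddCircle.volume_eq_smul_haarAddCircle, smul_smul, ENNReal.inv_mul_cancel, one_smul]
  · exact (ENNReal.ofReal_pos.mpr two_pi_pos).ne'
  · exact ENNReal.ofReal_ne_top

lemma arc_meas (β L : ℝ) :
    MeasurableSet ((fun θ : ℝ => (θ : AddCircle (2 * π))) '' Icc β (β + L)) := by
  have hc : Continuous (fun θ : ℝ => (θ : AddCircle (2 * π))) := continuous_quotient_mk'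
  exact (isCompact_Icc.image hc).isClosed.measurableSet

lemma pre_eq {β L : ℝ} (hL0 : 0 ≤ L) (hL : L < 2 * π) :
    ((fun θ : ℝ => (θ : AddCircle (2 * π))) ⁻¹'
        ((fun θ : ℝ => (θ : AddCircle (2 * π))) '' Icc β (β + L))) ∩ Ioc β (β + 2 * π)
      = Ioc β (β + L) ∪ {β + 2 * π} := by
  have hT : (0:ℝ) < 2 * π := two_pi_pos
  ext θ
  simp only [Set.mem_inter_iff, Set.mem_preimage, Set.mem_image, Set.mem_Ioc, Set.mem_union,
    Set.mem_singleton_iff, Set.mem_Icc]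
  constructor
  · rintro ⟨⟨φ, ⟨hφ1, hφ2⟩, hcoe⟩, hθ1, hθ2⟩
    have h0 : ((θ - φ : ℝ) : AddCircle (2 * π)) = 0 := by
      rw [AddCircle.coe_sub, ← hcoe, sub_self]
    obtain ⟨n, hn⟩ := (AddCircle.coe_eq_zero_iff _).mp h0
    rw [zsmul_eq_mul] at hn
    have hb1 : (n:ℝ) * (2 * π) ≤ 2 * π := by rw [hn]; linarith
    have hb2 : -(2 * π) < (n:ℝ) * (2 * π) := by rw [hn]; linarith
    have hn1 : (n:ℝ) ≤ 1 := by nlinarith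
    have hn2 : (-1:ℝ) < n := by nlinarith
    have hn1' : n ≤ 1 := by exact_mod_cast hn1
    have hn2' : (0:ℤ) ≤ n := by
      have h : (-1:ℤ) < n := by exact_mod_cast hn2
      omega
    interval_cases n
    · left
      simp only [Int.cast_zero, zero_mul] at hn
      have : θ = φ := by linarith
      exact ⟨hθ1, by linarith⟩
    · right
      simp only [Int.cast_one, one_mul] at hn
      linarith
  · rintro (⟨h1, h2⟩ | rfl)
    · exact ⟨⟨θ, ⟨h1.le, h2⟩, rfl⟩, h1, by linarith⟩
    · exact ⟨⟨β, ⟨le_refl β, by linarith⟩, (AddCircle.coe_add_period (2 * π) β).symm⟩,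
        by linarith, le_refl _⟩

lemma setL (F : AddCircle (2 * π) → ℝ≥0∞) {β L : ℝ} (hL0 : 0 ≤ L) (hL : L < 2 * π) :
    ∫⁻ x in (fun θ : ℝ => (θ : AddCircle (2 * π))) '' Icc β (β + L), F x
        ∂(AddCircle.haarAddCircle : Measure (AddCircle (2 * π)))
      = (ENNReal.ofReal (2 * π))⁻¹ * ∫⁻ θ in Ioc β (β + L), F (θ : AddCircle (2 * π)) ∂volume := by
  set B := (fun θ : ℝ => (θ : AddCircle (2 * π))) '' Icc β (β + L) with hBdef
  have hB : MeasurableSet B := arc_meas β L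
  have hmk : Measurable (fun θ : ℝ => (θ : AddCircle (2 * π))) :=
    AddCircle.measurable_mk'
  have hpreM : MeasurableSet ((fun θ : ℝ => (θ : AddCircle (2 * π))) ⁻¹' B) := hmk hB
  calc ∫⁻ x in B, F x ∂(AddCircle.haarAddCircle : Measure (AddCircle (2 * π)))
      = (ENNReal.ofReal (2 * π))⁻¹ * ∫⁻ x in B, F x ∂(volume) := by
        rw [haar_eq, Measure.restrict_smul, lintegral_smul_measure, smul_eq_mul]
    _ = (ENNReal.ofReal (2 * π))⁻¹ * ∫⁻ x, B.indicator F x ∂(volume) := by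
        rw [lintegral_indicator hB]
    _ = (ENNReal.ofReal (2 * π))⁻¹ *
        ∫⁻ θ in Ioc β (β + 2 * π), B.indicator F (θ : AddCircle (2 * π)) ∂volume := by
        rw [AddCircle.lintegral_preimage (2 * π) β]
    _ = (ENNReal.ofReal (2 * π))⁻¹ *
        ∫⁻ θ in Ioc β (β + 2 * π),
          ((fun θ : ℝ => (θ : AddCircle (2 * π))) ⁻¹' B).indicator
            (fun θ : ℝ => F (θ : AddCircle (2 * π))) θ ∂volume := by
        congr 1
    _ = (ENNReal.ofReal (2 * π))⁻¹ *
        ∫⁻ θ in ((fun θ : ℝ => (θ : AddCircle (2 * π))) ⁻¹' B) ∩ Ioc β (β + 2 * π),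
          F (θ : AddCircle (2 * π)) ∂volume := by
        rw [lintegral_indicator hpreM, Measure.restrict_restrict hpreM]
    _ = (ENNReal.ofReal (2 * π))⁻¹ *
        ∫⁻ θ in Ioc β (β + L) ∪ {β + 2 * π}, F (θ : AddCircle (2 * π)) ∂volume := by
        rw [hBdef, pre_eq hL0 hL]
    _ = (ENNReal.ofReal (2 * π))⁻¹ *
        ∫⁻ θ in Ioc β (β + L), F (θ : AddCircle (2 * π)) ∂volume := by
        congr 1
        rw [lintegral_union (measurableSet_singleton _)
            (by simp only [Set.disjoint_singleton_right, Set.mem_Ioc, not_and_or, not_le]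
                right; linarith),
          setLIntegral_measure_zero _ _ (measure_singleton _), add_zero]

lemma integral_dens (s : ℕ) (hs : 0 < s) (β L : ℝ) :
    ∫ θ in β..(β + L), (1 + (1 / 2) * Real.sin (2 * s * θ))
      = L + (1 / 2) * ((2 * (s:ℝ))⁻¹ * (Real.cos (2 * s * β) - Real.cos (2 * s * (β + L)))) := by
  have hc : (2 * (s:ℝ)) ≠ 0 := by positivity
  have h1 : IntervalIntegrable (fun _ : ℝ => (1:ℝ)) volume β (β + L) := intervalIntegrable_const
  have h2 : IntervalIntegrable (fun θ : ℝ => (1 / 2) * Real.sin (2 * s * θ)) volume β (β + L) :=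
    (Continuous.intervalIntegrable (by continuity) _ _)
  rw [intervalIntegral.integral_add h1 h2, intervalIntegral.integral_const,
    intervalIntegral.integral_const_mul]
  have h3 : ∀ θ : ℝ, Real.sin (2 * s * θ) = Real.sin (2 * (s:ℝ) * θ) := fun θ => rfl
  have h4 := intervalIntegral.integral_comp_mul_left (a := β) (b := β + L)
      (fun x => Real.sin x) hc
  simp only [h3, h4, integral_sin, smul_eq_mul]
  ring

lemma lint_eq (s : ℕ) (c M : ℝ) (hM : 0 ≤ M) :
    ∫⁻ θ in Ioc c (c + M), ENNReal.ofReal (1 + (1 / 2) * Real.sin (2 * s * θ)) ∂volume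
      = ENNReal.ofReal (∫ θ in c..(c + M), (1 + (1 / 2) * Real.sin (2 * s * θ))) := by
  rw [intervalIntegral.integral_of_le (by linarith)]
  rw [← ofReal_integral_eq_lintegral_ofReal]
  · exact (Continuous.integrableOn_Ioc (by continuity))
  · exact Filter.Eventually.of_forall fun x => by
      simp only [Pi.zero_apply]
      nlinarith [Real.neg_one_le_sin (2 * s * x)]

/-- The closed arc of the circle `ℝ / 2πℤ` starting at angle `β` of arc length `2πa`. -/
noncomputable def arc (a β : ℝ) : Set (AddCircle (2 * π)) :=
  (fun θ : ℝ => (θ : AddCircle (2 * π))) '' Set.Icc β (β + 2 * π * a)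

/-- The measure `Q` on the circle with density `1 + (1/2) sin (2sθ)` with respect to the
normalized arc-length measure, the angle `θ` being taken in `[0, 2π)`. -/
noncomputable def Qmeas (s : ℕ) : Measure (AddCircle (2 * π)) :=
  (AddCircle.haarAddCircle : Measure (AddCircle (2 * π))).withDensity
    (AddCircle.liftIco (2 * π) 0
      (fun θ : ℝ => ENNReal.ofReal (1 + (1 / 2) * Real.sin (2 * s * θ))))

lemma LintVal (s : ℕ) (hs : 0 < s) (β L : ℝ) (hL0 : 0 ≤ L) :
    ∫⁻ θ in Ioc β (β + L),
      AddCircle.liftIco (2 * π) 0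
        (fun θ : ℝ => ENNReal.ofReal (1 + (1 / 2) * Real.sin (2 * s * θ)))
        (θ : AddCircle (2 * π)) ∂volume
      = ENNReal.ofReal
          (L + (1 / 2) * ((2 * (s:ℝ))⁻¹ *
            (Real.cos (2 * s * β) - Real.cos (2 * s * (β + L))))) := by
  rw [lintegral_congr (fun θ => lift_eval s θ), lint_eq s β L hL0, integral_dens s hs β L]

lemma Qval (s : ℕ) (hs : 0 < s) {β L : ℝ} (hL0 : 0 ≤ L) (hL : L < 2 * π) :
    Qmeas s ((fun θ : ℝ => (θ : AddCircle (2 * π))) '' Icc β (β + L))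
      = (ENNReal.ofReal (2 * π))⁻¹ *
        ENNReal.ofReal
          (L + (1 / 2) * ((2 * (s:ℝ))⁻¹ *
            (Real.cos (2 * s * β) - Real.cos (2 * s * (β + L))))) := by
  rw [Qmeas, withDensity_apply _ (arc_meas β L), setL _ hL0 hL, LintVal s hs β L hL0]

lemma Hval {β L : ℝ} (hL0 : 0 ≤ L) (hL : L < 2 * π) :
    (AddCircle.haarAddCircle : Measure (AddCircle (2 * π)))
        ((fun θ : ℝ => (θ : AddCircle (2 * π))) '' Icc β (β + L))
      = (ENNReal.ofReal (2 * π))⁻¹ * ENNReal.ofReal L := by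
  rw [← setLIntegral_one, setL _ hL0 hL, setLIntegral_one, Real.volume_Ioc]
  congr 1
  ring

lemma Qprob (s : ℕ) (hs : 0 < s) : IsProbabilityMeasure (Qmeas s) := by
  constructor
  rw [Qmeas, withDensity_apply _ MeasurableSet.univ, Measure.restrict_univ, haar_eq,
    lintegral_smul_measure, ← AddCircle.lintegral_preimage (2 * π) 0,
    LintVal s hs 0 (2 * π) two_pi_pos.le]
  have harg : 2 * (s:ℝ) * (0 + 2 * π) = 2 * s * 0 + ((2 * s : ℤ) : ℝ) * (2 * π) := by
    push_cast; ring
  rw [harg, Real.cos_add_int_mul_two_pi, sub_self, mul_zero, mul_zero, add_zero, smul_eq_mul,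
    ENNReal.inv_mul_cancel (ENNReal.ofReal_pos.mpr two_pi_pos).ne' ENNReal.ofReal_ne_top]

theorem stmt6 (r s : ℕ) (hr : 0 < r) (hs : 0 < s) (hcop : Nat.Coprime r s)
    (a : ℝ) (ha : a = (r : ℝ) / s) (ha' : a ∈ Set.Ioo (0 : ℝ) (1 / 2)) :
    IsProbabilityMeasure (Qmeas s) ∧
    Qmeas s ≠ (AddCircle.haarAddCircle : Measure (AddCircle (2 * π))) ∧
    ∀ β : ℝ,
      Qmeas s (arc a β) = (AddCircle.haarAddCircle : Measure (AddCircle (2 * π))) (arc a β) ∧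
      (AddCircle.haarAddCircle : Measure (AddCircle (2 * π))) (arc a β) = ENNReal.ofReal a := by
  obtain ⟨ha0, ha2⟩ := ha'
  have hsR : (0:ℝ) < s := by exact_mod_cast hs
  have hne : ENNReal.ofReal (2 * π) ≠ 0 := (ENNReal.ofReal_pos.mpr two_pi_pos).ne'
  have hnt : ENNReal.ofReal (2 * π) ≠ ⊤ := ENNReal.ofReal_ne_top
  refine ⟨Qprob s hs, ?_, ?_⟩
  · -- Q ≠ P
    intro h
    set L₀ : ℝ := π / (2 * s) with hL₀def
    have hL₀pos : 0 < L₀ := by positivity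
    have hL₀lt : L₀ < 2 * π := by
      have h1 : (1:ℝ) ≤ s := by exact_mod_cast hs
      rw [hL₀def, div_lt_iff₀ (by positivity)]
      nlinarith [pi_pos, h1]
    have hQ := Qval s hs (β := 0) hL₀pos.le hL₀lt
    have hH := Hval (β := 0) hL₀pos.le hL₀lt
    rw [h, hH] at hQ
    have harg : 2 * (s:ℝ) * (0 + L₀) = π := by
      rw [hL₀def]; field_simp; ring
    rw [mul_zero, Real.cos_zero, harg, Real.cos_pi] at hQ
    have h2 : (L₀ : ℝ) = L₀ + 1 / 2 * ((2 * (s:ℝ))⁻¹ * (1 - -1)) := by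
      have := (ENNReal.mul_right_inj (a := (ENNReal.ofReal (2 * π))⁻¹)
        (by simpa using hnt) (by simpa using hne)).mp hQ
      exact (ENNReal.ofReal_eq_ofReal_iff hL₀pos.le (by positivity)).mp this
    have : (2 * (s:ℝ))⁻¹ > 0 := by positivity
    nlinarith [h2]
  · -- arc values
    intro β
    have hL0 : (0:ℝ) ≤ 2 * π * a := by positivity
    have hL : 2 * π * a < 2 * π := by nlinarith [pi_pos]
    have hsa : (s:ℝ) * a = r := by rw [ha]; field_simp
    have hcoseq : Real.cos (2 * s * (β + 2 * π * a)) = Real.cos (2 * s * β) := by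
      have harg : 2 * (s:ℝ) * (β + 2 * π * a) = 2 * s * β + ((2 * r : ℤ) : ℝ) * (2 * π) := by
        push_cast
        linear_combination (4 * π) * hsa
      rw [harg, Real.cos_add_int_mul_two_pi]
    have hQ := Qval s hs (β := β) hL0 hL
    have hH := Hval (β := β) hL0 hL
    rw [hcoseq, sub_self, mul_zero, mul_zero, add_zero] at hQ
    have hconv : (ENNReal.ofReal (2 * π))⁻¹ * ENNReal.ofReal (2 * π * a) = ENNReal.ofReal a := by
      rw [ENNReal.ofReal_mul (le_of_lt two_pi_pos), ← mul_assoc,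
        ENNReal.inv_mul_cancel hne hnt, one_mul]
    have harc : arc a β = (fun θ : ℝ => (θ : AddCircle (2 * π))) '' Icc β (β + 2 * π * a) := rfl
    rw [harc]
    exact ⟨by rw [hQ, hH], by rw [hH, hconv]⟩
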